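/- Let P denote the projection onto the harmonic part PΩ̄ = ker(Id−κ)² in the Cuntz–Quillen harmonic decomposition Ω̄ = PΩ̄ ⊕ P⊥Ω̄ where P⊥Ω̄ = im(Id−κ)². Then the antiharmonic part of the commutator subspace is everything: P⊥ [Ω,Ω]‾ = P⊥ Ω̄, i.e. P⊥Ω̄ ⊆ [Ω,Ω]‾ (the closure meaning image in Ω̄ of the span of graded commutators). -/

import Mathlib

open Polynomial

/-- in the Cuntz–Quillen harmonic decomposition
`Ω̄ = PΩ̄ ⊕ P⊥Ω̄` (with `PΩ̄ = ker (Id−κ)²`, `P⊥Ω̄ = im (Id−κ)²`), the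
antiharmonic part of the commutator subspace is everything:
`P⊥ [Ω,Ω]‾ = P⊥ Ω̄`, degreewise in positive degrees. -/
theorem stmt_14 {k A Ω : Type} [CommRing k] [Algebra ℚ k]
    [Ring A] [Algebra k A] [Ring Ω] [Algebra k Ω]
    (ι : A →ₐ[k] Ω) (d : Ω →ₗ[k] Ω) (G : ℕ → Submodule k Ω)
    (hsplit : ∃ p : A →ₗ[k] k, ∀ c : k, p (algebraMap k A c) = c)
    (hG0 : G 0 = LinearMap.range ι.toLinearMap)
    (hGmul : ∀ m n : ℕ, ∀ x ∈ G m, ∀ y ∈ G n, x * y ∈ G (m + n))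
    (hdG : ∀ n : ℕ, ∀ x ∈ G n, d x ∈ G (n + 1))
    (hdd : ∀ x : Ω, d (d x) = 0)
    (hleib : ∀ (m : ℕ) (x : Ω), x ∈ G m → ∀ y : Ω,
      d (x * y) = d x * y + ((-1 : ℤ) ^ m) • (x * d y))
    (hspan : ∀ n : ℕ, G n = Submodule.span k
      {w : Ω | ∃ a : ℕ → A,
        w = ι (a 0) * (List.ofFn fun i : Fin n => d (ι (a (i.1 + 1)))).prod})
    (hsup : (⨆ n, G n) = ⊤)
    -- the Karoubi operator
    (κ : Module.End k Ω)
    (hκ : ∀ (n : ℕ) (x : Ω), x ∈ G n → ∀ a : A,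
      κ (x * d (ι a)) = ((-1 : ℤ) ^ n) • (d (ι a) * x))
    (hκ0 : ∀ a : A, κ (ι a) = 0)
    (hκG : ∀ n : ℕ, ∀ x ∈ G n, κ x ∈ G n)
    -- the Cuntz–Quillen identity (κⁿ−1)(κ^{n+1}−1) = 0 on Ωⁿ
    (hκpoly : ∀ n : ℕ, ∀ x ∈ G n, ((κ ^ n - 1) * (κ ^ (n + 1) - 1)) x = 0)
    -- P⊥, the projection onto im (Id−κ)² along ker (Id−κ)²
    (Pperp : Module.End k Ω)
    (hPr : ∀ x : Ω, Pperp x ∈ LinearMap.range (((1 : Module.End k Ω) - κ) ^ 2))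
    (hPk : ∀ x : Ω, x - Pperp x ∈ LinearMap.ker (((1 : Module.End k Ω) - κ) ^ 2))
    (hPP : ∀ x : Ω, Pperp (Pperp x) = Pperp x)
    (hPG : ∀ n : ℕ, ∀ x ∈ G n, Pperp x ∈ G n) :
    ∀ n : ℕ, 1 ≤ n →
      Submodule.map (Pperp : Ω →ₗ[k] Ω)
          ((Submodule.span k {c : Ω | ∃ (p q : ℕ) (y z : Ω),
              y ∈ G p ∧ z ∈ G q ∧ c = y * z - ((-1 : ℤ) ^ (p * q)) • (z * y)}) ⊓ G n)
        = Submodule.map (Pperp : Ω →ₗ[k] Ω) (G n) := by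
  intro n hn
  letI : Algebra ℚ (Module.End k Ω) :=
    RingHom.toAlgebra' ((algebraMap k (Module.End k Ω)).comp (algebraMap ℚ k))
      (fun c x => Algebra.commutes (algebraMap ℚ k c) x)
  set CS : Submodule k Ω := Submodule.span k {c : Ω | ∃ (p q : ℕ) (y z : Ω),
      y ∈ G p ∧ z ∈ G q ∧ c = y * z - ((-1 : ℤ) ^ (p * q)) • (z * y)} with hCSdef
  -- applying a product of polynomials in κ
  have happ : ∀ (f g : ℚ[X]) (x : Ω),
      (aeval κ (f * g)) x = (aeval κ f) ((aeval κ g) x) := by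
    intro f g x
    rw [map_mul]
    rfl
  -- powers of κ preserve each G m
  have hκpow : ∀ (j m : ℕ), ∀ x ∈ G m, (κ ^ j) x ∈ G m := by
    intro j
    induction j with
    | zero => intro m x hx; simpa using hx
    | succ j ih =>
      intro m x hx
      rw [pow_succ, Module.End.mul_apply]
      exact ih m _ (hκG m x hx)
  -- polynomials in κ preserve each G m
  have hGpoly : ∀ (f : ℚ[X]) (m : ℕ), ∀ x ∈ G m, (aeval κ f) x ∈ G m := by
    intro f m x hx
    induction f using Polynomial.induction_on' with
    | add p q hp hq =>
      rw [map_add, LinearMap.add_apply]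
      exact (G m).add_mem hp hq
    | monomial j a =>
      rw [aeval_monomial, Module.End.mul_apply]
      show ((algebraMap k (Module.End k Ω)) ((algebraMap ℚ k) a)) ((κ ^ j) x) ∈ G m
      rw [Module.algebraMap_end_apply]
      exact (G m).smul_mem _ (hκpow j m x hx)
  -- annihilating polynomials on G m
  have hevgeom : ∀ N : ℕ, Polynomial.eval (1 : ℚ) (∑ i ∈ Finset.range N, (X : ℚ[X]) ^ i)
      = (N : ℚ) := by
    intro N
    rw [eval_finset_sum]
    simp
  have hannG : ∀ (m : ℕ), ∀ x ∈ G m,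
      ∃ u : ℚ[X], u.eval 1 ≠ 0 ∧ (aeval κ (((X : ℚ[X]) - 1) ^ 2 * u)) x = 0 := by
    intro m x hx
    match m with
    | 0 =>
      refine ⟨X, by simp, ?_⟩
      have hx0 : κ x = 0 := by
        rw [hG0] at hx
        obtain ⟨a, rfl⟩ := hx
        exact hκ0 a
      rw [happ, aeval_X, hx0, map_zero]
    | Nat.succ m =>
      refine ⟨(∑ i ∈ Finset.range (m + 1), X ^ i) * (∑ i ∈ Finset.range (m + 2), X ^ i), ?_, ?_⟩
      · rw [eval_mul, hevgeom, hevgeom]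
        positivity
      · have hfact : ((X : ℚ[X]) - 1) ^ 2 *
            ((∑ i ∈ Finset.range (m + 1), X ^ i) * (∑ i ∈ Finset.range (m + 2), X ^ i))
            = ((X : ℚ[X]) ^ (m + 1) - 1) * ((X : ℚ[X]) ^ (m + 1 + 1) - 1) := by
          rw [← geom_sum_mul (X : ℚ[X]) (m + 1), ← geom_sum_mul (X : ℚ[X]) (m + 2)]
          ring
        rw [hfact]
        have he : aeval κ (((X : ℚ[X]) ^ (m + 1) - 1) * ((X : ℚ[X]) ^ (m + 1 + 1) - 1))
            = (κ ^ (m + 1) - 1) * (κ ^ (m + 1 + 1) - 1) := by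
          simp [map_mul, map_sub, map_pow]
        rw [he]
        exact hκpoly (m + 1) x hx
  -- annihilating polynomials globally
  have hannTop : ∀ v : Ω,
      ∃ u : ℚ[X], u.eval 1 ≠ 0 ∧ (aeval κ (((X : ℚ[X]) - 1) ^ 2 * u)) v = 0 := by
    intro v
    have hv : v ∈ (⨆ m, G m) := by rw [hsup]; trivial
    refine Submodule.iSup_induction (motive := fun v =>
      ∃ u : ℚ[X], u.eval 1 ≠ 0 ∧ (aeval κ (((X : ℚ[X]) - 1) ^ 2 * u)) v = 0) G hv ?_ ?_ ?_
    · intro i x hx; exact hannG i x hx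
    · exact ⟨1, by simp, by simp⟩
    · rintro x y ⟨u1, h1, e1⟩ ⟨u2, h2, e2⟩
      refine ⟨u1 * u2, by rw [eval_mul]; exact mul_ne_zero h1 h2, ?_⟩
      rw [map_add]
      have hx0 : (aeval κ (((X : ℚ[X]) - 1) ^ 2 * (u1 * u2))) x = 0 := by
        rw [show ((X : ℚ[X]) - 1) ^ 2 * (u1 * u2) = u2 * (((X : ℚ[X]) - 1) ^ 2 * u1) by ring,
          happ, e1, map_zero]
      have hy0 : (aeval κ (((X : ℚ[X]) - 1) ^ 2 * (u1 * u2))) y = 0 := by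
        rw [show ((X : ℚ[X]) - 1) ^ 2 * (u1 * u2) = u1 * (((X : ℚ[X]) - 1) ^ 2 * u2) by ring,
          happ, e2, map_zero]
      rw [hx0, hy0, add_zero]
  -- (1 - κ)² as a polynomial in κ
  have hsq : ((1 : Module.End k Ω) - κ) ^ 2 = aeval κ (((X : ℚ[X]) - 1) ^ 2) := by
    have h1 : aeval κ (((X : ℚ[X]) - 1) ^ 2) = (κ - 1) ^ 2 := by
      simp [map_pow, map_sub]
    rw [h1, ← neg_sub κ (1 : Module.End k Ω)]; exact neg_sq (κ - 1 : Module.End k Ω)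
  -- coprimality
  have hcop : ∀ u : ℚ[X], u.eval 1 ≠ 0 → IsCoprime (((X : ℚ[X]) - 1) ^ 2) u := by
    intro u hu
    have h1 : IsCoprime ((X : ℚ[X]) - 1) u := by
      have hirr : Irreducible ((X : ℚ[X]) - C 1) := Polynomial.irreducible_X_sub_C (1 : ℚ)
      have hnd : ¬ ((X : ℚ[X]) - C 1) ∣ u := by
        intro hdvd
        exact hu (by simpa [Polynomial.IsRoot] using (Polynomial.dvd_iff_isRoot).mp hdvd)
      have := hirr.coprime_iff_not_dvd.mpr hnd
      simpa using this
    exact h1.pow_left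
  -- ker(1-κ)² ∩ im(1-κ)² = 0
  have hker0 : ∀ w : Ω, (((1 : Module.End k Ω) - κ) ^ 2) w = 0 →
      w ∈ LinearMap.range (((1 : Module.End k Ω) - κ) ^ 2) → w = 0 := by
    intro w hwk hwr
    obtain ⟨v, hv⟩ := hwr
    obtain ⟨u, hu1, hu2⟩ := hannTop v
    have h2 : (aeval κ u) w = 0 := by
      rw [← hv, hsq, ← happ,
        show u * ((X : ℚ[X]) - 1) ^ 2 = ((X : ℚ[X]) - 1) ^ 2 * u from mul_comm _ _]
      exact hu2
    obtain ⟨a, b, hab⟩ := hcop u hu1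
    have hone : (aeval κ (a * ((X : ℚ[X]) - 1) ^ 2 + b * u)) w = w := by
      rw [hab]; simp
    have h1 : (aeval κ (((X : ℚ[X]) - 1) ^ 2)) w = 0 := by rw [← hsq]; exact hwk
    calc w = (aeval κ (a * ((X : ℚ[X]) - 1) ^ 2 + b * u)) w := hone.symm
    _ = (aeval κ a) ((aeval κ (((X : ℚ[X]) - 1) ^ 2)) w) + (aeval κ b) ((aeval κ u) w) := by
        rw [map_add, LinearMap.add_apply, happ, happ]
    _ = 0 := by rw [h1, h2, map_zero, map_zero, add_zero]
  -- Pperp kills ker(1-κ)²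
  have hPker : ∀ z : Ω, (((1 : Module.End k Ω) - κ) ^ 2) z = 0 → Pperp z = 0 := by
    intro z hz
    refine hker0 _ ?_ (hPr z)
    have h := hPk z
    rw [LinearMap.mem_ker, map_sub, hz, zero_sub, neg_eq_zero] at h
    exact h
  -- (κ - 1) maps G n into the commutator span
  have hcommG : ∀ w ∈ G n, κ w - w ∈ CS := by
    obtain ⟨m, rfl⟩ : ∃ m, n = m + 1 := ⟨n - 1, by omega⟩
    intro w hw
    rw [hspan (m + 1)] at hw
    induction hw using Submodule.span_induction with
    | mem w hw =>
      obtain ⟨a, rfl⟩ := hw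
      have hprod : (List.ofFn fun i : Fin (m + 1) => d (ι (a (i.1 + 1)))).prod
          = (List.ofFn fun i : Fin m => d (ι (a (i.1 + 1)))).prod * d (ι (a (m + 1))) := by
        rw [List.ofFn_succ', List.prod_concat]
        simp
      have hx' : ι (a 0) * (List.ofFn fun i : Fin m => d (ι (a (i.1 + 1)))).prod ∈ G m := by
        rw [hspan m]
        exact Submodule.subset_span ⟨a, rfl⟩
      have hz : d (ι (a (m + 1))) ∈ G 1 := by
        have h0 : (ι (a (m + 1)) : Ω) ∈ G 0 := by
          rw [hG0]; exact ⟨a (m + 1), rfl⟩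
        exact hdG 0 _ h0
      have hw' : ι (a 0) * (List.ofFn fun i : Fin (m + 1) => d (ι (a (i.1 + 1)))).prod
          = (ι (a 0) * (List.ofFn fun i : Fin m => d (ι (a (i.1 + 1)))).prod)
            * d (ι (a (m + 1))) := by
        rw [hprod, mul_assoc]
      rw [hw', hκ m _ hx' (a (m + 1))]
      have hgen : (ι (a 0) * (List.ofFn fun i : Fin m => d (ι (a (i.1 + 1)))).prod)
            * d (ι (a (m + 1)))
            - ((-1 : ℤ) ^ (m * 1)) • (d (ι (a (m + 1)))
              * (ι (a 0) * (List.ofFn fun i : Fin m => d (ι (a (i.1 + 1)))).prod)) ∈ CS :=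
        Submodule.subset_span ⟨m, 1, _, _, hx', hz, rfl⟩
      have heq : ((-1 : ℤ) ^ m) • (d (ι (a (m + 1)))
            * (ι (a 0) * (List.ofFn fun i : Fin m => d (ι (a (i.1 + 1)))).prod))
          - (ι (a 0) * (List.ofFn fun i : Fin m => d (ι (a (i.1 + 1)))).prod)
            * d (ι (a (m + 1)))
          = -((ι (a 0) * (List.ofFn fun i : Fin m => d (ι (a (i.1 + 1)))).prod)
            * d (ι (a (m + 1)))
            - ((-1 : ℤ) ^ (m * 1)) • (d (ι (a (m + 1)))
              * (ι (a 0) * (List.ofFn fun i : Fin m => d (ι (a (i.1 + 1)))).prod))) := by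
        rw [neg_sub, mul_one]
      rw [heq]
      exact CS.neg_mem hgen
    | zero => simp
    | add x y hx hy ihx ihy =>
      have h : κ (x + y) - (x + y) = (κ x - x) + (κ y - y) := by
        rw [map_add]; abel
      rw [h]
      exact CS.add_mem ihx ihy
    | smul c x hx ihx =>
      have h : κ (c • x) - c • x = c • (κ x - x) := by
        rw [map_smul, smul_sub]
      rw [h]
      exact CS.smul_mem c ihx
  -- main argument
  apply le_antisymm
  · exact Submodule.map_mono inf_le_right
  · rintro w ⟨x, hx, rfl⟩
    set un : ℚ[X] := (∑ i ∈ Finset.range n, X ^ i) * (∑ i ∈ Finset.range (n + 1), X ^ i)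
      with hundef
    have hune : un.eval 1 ≠ 0 := by
      rw [hundef, eval_mul, hevgeom, hevgeom]
      have h1 : (0 : ℚ) < n := by exact_mod_cast hn
      positivity
    have hfactn : ((X : ℚ[X]) - 1) ^ 2 * un
        = ((X : ℚ[X]) ^ n - 1) * ((X : ℚ[X]) ^ (n + 1) - 1) := by
      rw [hundef, ← geom_sum_mul (X : ℚ[X]) n, ← geom_sum_mul (X : ℚ[X]) (n + 1)]
      ring
    obtain ⟨a, b, hab⟩ := hcop un hune
    set c : Ω := (aeval κ (((X : ℚ[X]) - 1) ^ 2 * a)) x with hcdef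
    have hcCS : c ∈ CS := by
      have h1 : c = κ ((aeval κ (((X : ℚ[X]) - 1) * a)) x)
          - (aeval κ (((X : ℚ[X]) - 1) * a)) x := by
        rw [hcdef, show ((X : ℚ[X]) - 1) ^ 2 * a = ((X : ℚ[X]) - 1) * (((X : ℚ[X]) - 1) * a)
          by ring, happ, map_sub, aeval_X, map_one, LinearMap.sub_apply, Module.End.one_apply]
      rw [h1]
      exact hcommG _ (hGpoly _ n x hx)
    have hcG : c ∈ G n := hGpoly _ n x hx
    have hxc : (((1 : Module.End k Ω) - κ) ^ 2) (x - c) = 0 := by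
      have hx2 : x - c = (aeval κ (b * un)) x := by
        have h1 : x = (aeval κ (a * ((X : ℚ[X]) - 1) ^ 2 + b * un)) x := by
          rw [hab]; simp
        calc x - c = (aeval κ (a * ((X : ℚ[X]) - 1) ^ 2 + b * un)) x - c := by rw [← h1]
        _ = (aeval κ (a * ((X : ℚ[X]) - 1) ^ 2)) x + (aeval κ (b * un)) x - c := by
            rw [map_add, LinearMap.add_apply]
        _ = (aeval κ (b * un)) x := by
            rw [hcdef, show a * ((X : ℚ[X]) - 1) ^ 2 = ((X : ℚ[X]) - 1) ^ 2 * a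
              from mul_comm _ _]
            abel
      rw [hx2, hsq, ← happ,
        show ((X : ℚ[X]) - 1) ^ 2 * (b * un) = b * (((X : ℚ[X]) - 1) ^ 2 * un) by ring,
        hfactn, happ]
      have he : aeval κ (((X : ℚ[X]) ^ n - 1) * ((X : ℚ[X]) ^ (n + 1) - 1))
          = (κ ^ n - 1) * (κ ^ (n + 1) - 1) := by
        simp [map_mul, map_sub, map_pow]
      rw [he, hκpoly n x hx, map_zero]
    have hPxc : Pperp x = Pperp c := by
      have h := hPker (x - c) hxc
      rw [map_sub] at h
      exact sub_eq_zero.mp h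
    exact ⟨c, ⟨hcCS, hcG⟩, hPxc.symm⟩
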